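/- Let e_{m,k} (m ≥ 0, 0 ≤ k ≤ 2^m − 1) denote the Faber–Schauder functions on [0,1]: e_{m,k} is supported on [k 2^{-m}, (k+1) 2^{-m}], is piecewise linear with slope 2^{m/2} on [k 2^{-m}, (k + 1/2) 2^{-m}] and slope −2^{m/2} on [(k + 1/2) 2^{-m}, (k+1) 2^{-m}], and vanishes at the endpoints. Let (θ_{m,k}) be real coefficients such that X(t) = Σ_{m=0}^∞ Σ_{k=0}^{2^m − 1} θ_{m,k} e_{m,k}(t) converges uniformly on [0,1]. Then for every n ≥ 1, Σ_{j=0}^{2^n − 1} (X((j+1)/2^n) − X(j/2^n))² = 2^{-n} Σ_{m=0}^{n−1} Σ_{k=0}^{2^m − 1} θ_{m,k}². -/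

import Mathlib

open Filter Topology

/-- The Faber–Schauder function `e_{m,k}` on `[0,1]`: supported on `[k 2⁻ᵐ, (k+1) 2⁻ᵐ]`,
piecewise linear with slope `2^{m/2}` on the left half of its support and slope `-2^{m/2}`
on the right half, vanishing at the endpoints. -/
noncomputable def faberSchauder (m k : ℕ) (t : ℝ) : ℝ :=
  (2 : ℝ) ^ ((m : ℝ) / 2) * max 0 (min (t - (k : ℝ) / 2 ^ m) (((k : ℝ) + 1) / 2 ^ m - t))

lemma tent_zero_left {a b t : ℝ} (h : t ≤ a) : max 0 (min (t - a) (b - t)) = 0 :=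
  max_eq_left (min_le_of_left_le (by linarith))

lemma tent_zero_right {a b t : ℝ} (h : b ≤ t) : max 0 (min (t - a) (b - t)) = 0 :=
  max_eq_left (min_le_of_right_le (by linarith))

lemma tent_left {a b t : ℝ} (h1 : a ≤ t) (h2 : 2 * t ≤ a + b) :
    max 0 (min (t - a) (b - t)) = t - a := by
  rw [min_eq_left (by linarith), max_eq_right (by linarith)]

lemma tent_right {a b t : ℝ} (h1 : a + b ≤ 2 * t) (h2 : t ≤ b) :
    max 0 (min (t - a) (b - t)) = b - t := by
  rw [min_eq_right (by linarith), max_eq_right (by linarith)]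

lemma tent_sd {a b L R : ℝ} (hLR : L ≤ R)
    (h : R ≤ a ∨ (a ≤ L ∧ 2 * R ≤ a + b) ∨ (a + b ≤ 2 * L ∧ R ≤ b) ∨ b ≤ L) :
    2 * max 0 (min ((L + R) / 2 - a) (b - (L + R) / 2))
      - max 0 (min (L - a) (b - L)) - max 0 (min (R - a) (b - R)) = 0 := by
  have hm1 : L ≤ (L + R) / 2 := by linarith
  have hm2 : (L + R) / 2 ≤ R := by linarith
  rcases h with h | ⟨h1, h2⟩ | ⟨h1, h2⟩ | h
  · rw [tent_zero_left (by linarith), tent_zero_left (by linarith),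
      tent_zero_left (by linarith : R ≤ a)]; ring
  · rw [tent_left (by linarith) (by linarith), tent_left h1 (by linarith),
      tent_left (by linarith) h2]; ring
  · rw [tent_right (by linarith) (by linarith), tent_right h1 (by linarith),
      tent_right (by linarith) h2]; ring
  · rw [tent_zero_right (by linarith), tent_zero_right (by linarith : b ≤ L),
      tent_zero_right (by linarith)]; ring

lemma fs_zero (m k : ℕ) {t : ℝ} (i : ℕ) (ht : t = (i : ℝ) / 2 ^ m) :
    faberSchauder m k t = 0 := by
  subst ht
  unfold faberSchauder
  have hp : (0:ℝ) < 2 ^ m := by positivity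
  rcases le_or_gt i k with h | h
  · rw [tent_zero_left ((div_le_div_iff_of_pos_right hp).2 (by exact_mod_cast h)), mul_zero]
  · rw [tent_zero_right ((div_le_div_iff_of_pos_right hp).2 (by exact_mod_cast h)), mul_zero]

lemma fs_zero' (m n j k : ℕ) (h : n ≤ m) : faberSchauder m k ((j : ℝ) / 2 ^ n) = 0 := by
  apply fs_zero m k (j * 2 ^ (m - n))
  have : (2:ℝ) ^ m = 2 ^ n * 2 ^ (m - n) := by
    rw [← pow_add, Nat.add_sub_cancel' h]
  push_cast
  rw [this]
  field_simp

lemma sum_range_two_mul (N : ℕ) (f : ℕ → ℝ) :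
    ∑ j ∈ Finset.range (2 * N), f j = ∑ i ∈ Finset.range N, (f (2 * i) + f (2 * i + 1)) := by
  induction N with
  | zero => simp
  | succ N ih =>
    rw [show 2 * (N + 1) = 2 * N + 1 + 1 by ring, Finset.sum_range_succ, Finset.sum_range_succ,
      Finset.sum_range_succ, ih]; ring

lemma fs_sd (m n i k : ℕ) (hm : m ≤ n) :
    2 * faberSchauder m k ((2 * (i : ℝ) + 1) / 2 ^ (n + 1))
      - faberSchauder m k ((2 * (i : ℝ)) / 2 ^ (n + 1))
      - faberSchauder m k ((2 * (i : ℝ) + 2) / 2 ^ (n + 1))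
    = if m = n ∧ k = i then (2 : ℝ) ^ ((n : ℝ) / 2) / 2 ^ n else 0 := by
  have hpn : (0:ℝ) < 2 ^ n := by positivity
  have hL : (2 * (i : ℝ)) / 2 ^ (n + 1) = (i : ℝ) / 2 ^ n := by
    rw [pow_succ]; field_simp
  have hR : (2 * (i : ℝ) + 2) / 2 ^ (n + 1) = ((i : ℝ) + 1) / 2 ^ n := by
    rw [pow_succ]; field_simp
  have hM : (2 * (i : ℝ) + 1) / 2 ^ (n + 1)
      = ((i : ℝ) / 2 ^ n + ((i : ℝ) + 1) / 2 ^ n) / 2 := by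
    rw [pow_succ]; field_simp; ring
  rw [hL, hR, hM]
  have hLR : (i : ℝ) / 2 ^ n ≤ ((i : ℝ) + 1) / 2 ^ n := by
    apply (div_le_div_iff_of_pos_right hpn).2; linarith
  unfold faberSchauder
  rcases eq_or_lt_of_le hm with rfl | hlt
  · -- m = n
    rcases eq_or_ne k i with rfl | hk
    · rw [if_pos ⟨rfl, rfl⟩]
      have h1 : (1:ℝ) / 2 ^ m > 0 := by positivity
      have hRL : ((k : ℝ) + 1) / 2 ^ m = (k : ℝ) / 2 ^ m + 1 / 2 ^ m := by ring
      rw [tent_zero_left (le_refl _), tent_zero_right (le_refl _),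
        tent_left (by linarith) (by rw [hRL]; linarith)]
      rw [hRL]; field_simp; ring
    · rw [if_neg (by simp [hk])]
      rcases lt_or_gt_of_ne hk with h | h
      · -- k < i : support to the left
        have hb : ((k : ℝ) + 1) / 2 ^ m ≤ (i : ℝ) / 2 ^ m :=
          (div_le_div_iff_of_pos_right hpn).2 (by exact_mod_cast h)
        rw [tent_zero_right (by linarith), tent_zero_right hb,
          tent_zero_right (by linarith)]
        ring
      · -- i < k : support to the right
        have ha : ((i : ℝ) + 1) / 2 ^ m ≤ (k : ℝ) / 2 ^ m :=
          (div_le_div_iff_of_pos_right hpn).2 (by exact_mod_cast h)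
        rw [tent_zero_left (by linarith), tent_zero_left (by linarith),
          tent_zero_left ha]
        ring
  · -- m < n
    rw [if_neg (by rintro ⟨rfl, -⟩; exact lt_irrefl _ hlt)]
    set d := n - m - 1 with hd
    have hn' : n = m + 1 + d := by omega
    have h2n : (2:ℝ) ^ n = 2 ^ m * (2 * 2 ^ d) := by
      rw [hn', pow_add, pow_add, pow_one]; ring
    have hpm : (0:ℝ) < 2 ^ m := by positivity
    have hpd : (0:ℝ) < 2 ^ d := by positivity
    have ha : (k : ℝ) / 2 ^ m = (2 * (k : ℝ) * 2 ^ d) / 2 ^ n := by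
      rw [h2n]; field_simp
    have hb : ((k : ℝ) + 1) / 2 ^ m = (2 * (k : ℝ) * 2 ^ d + 2 * 2 ^ d) / 2 ^ n := by
      rw [h2n]; field_simp
    have hP : (0:ℕ) < 2 ^ d := Nat.pow_pos (by norm_num)
    have key : ((i : ℝ) + 1) ≤ 2 * (k : ℝ) * 2 ^ d
        ∨ (2 * (k : ℝ) * 2 ^ d ≤ i ∧ 2 * ((i : ℝ) + 1) ≤ 2 * (2 * (k : ℝ) * 2 ^ d) + 2 ^ d * 2)
        ∨ (2 * (2 * (k : ℝ) * 2 ^ d) + 2 ^ d * 2 ≤ 2 * (i : ℝ)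
            ∧ ((i : ℝ) + 1) ≤ 2 * (k : ℝ) * 2 ^ d + 2 * 2 ^ d)
        ∨ 2 * (k : ℝ) * 2 ^ d + 2 * 2 ^ d ≤ (i : ℝ) := by
      have := hP
      rcases le_or_gt (i + 1) (2 * k * 2 ^ d) with h1 | h1
      · left; exact_mod_cast h1
      rcases le_or_gt (i + 1) (2 * k * 2 ^ d + 2 ^ d) with h2 | h2
      · right; left
        constructor
        · have : 2 * k * 2 ^ d ≤ i := by omega
          exact_mod_cast this
        · have : 2 * (i + 1) ≤ 2 * (2 * k * 2 ^ d) + 2 ^ d * 2 := by omega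
          exact_mod_cast this
      rcases le_or_gt (i + 1) (2 * k * 2 ^ d + 2 * 2 ^ d) with h3 | h3
      · right; right; left
        constructor
        · have : 2 * (2 * k * 2 ^ d) + 2 ^ d * 2 ≤ 2 * i := by omega
          exact_mod_cast this
        · exact_mod_cast h3
      · right; right; right
        have : 2 * k * 2 ^ d + 2 * 2 ^ d ≤ i := by omega
        exact_mod_cast this
    have hsd := tent_sd (a := (k : ℝ) / 2 ^ m) (b := ((k : ℝ) + 1) / 2 ^ m) hLR ?_
    · linear_combination (2 : ℝ) ^ ((m : ℝ) / 2) * hsd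
    · rw [ha, hb]
      rcases key with h | ⟨h1, h2⟩ | ⟨h1, h2⟩ | h
      · left
        exact (div_le_div_iff_of_pos_right hpn).2 h
      · right; left
        refine ⟨(div_le_div_iff_of_pos_right hpn).2 h1, ?_⟩
        rw [← add_div, show (2:ℝ) * (((i : ℝ) + 1) / 2 ^ n) = (2 * ((i:ℝ)+1)) / 2 ^ n by ring]
        exact (div_le_div_iff_of_pos_right hpn).2 (by linarith)
      · right; right; left
        refine ⟨?_, (div_le_div_iff_of_pos_right hpn).2 (by linarith)⟩
        rw [← add_div, show (2:ℝ) * ((i : ℝ) / 2 ^ n) = (2 * (i:ℝ)) / 2 ^ n by ring]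
        exact (div_le_div_iff_of_pos_right hpn).2 (by linarith)
      · right; right; right
        exact (div_le_div_iff_of_pos_right hpn).2 h

/-- If `X = Σ_{m,k} θ_{m,k} e_{m,k}` converges uniformly on `[0,1]`, then for
every `n ≥ 1` the level-`n` dyadic quadratic variation sum of `X` equals
`2^{-n} Σ_{m<n} Σ_{k<2^m} θ_{m,k}²`. -/
theorem dyadic_qv_of_schauder_series
    (θ : ℕ → ℕ → ℝ) (X : ℝ → ℝ)
    (hunif : TendstoUniformlyOn
      (fun M t => ∑ m ∈ Finset.range M, ∑ k ∈ Finset.range (2 ^ m),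
        θ m k * faberSchauder m k t)
      X atTop (Set.Icc 0 1)) :
    ∀ n : ℕ, 1 ≤ n →
      ∑ j ∈ Finset.range (2 ^ n),
          (X (((j : ℝ) + 1) / 2 ^ n) - X ((j : ℝ) / 2 ^ n)) ^ 2
        = (∑ m ∈ Finset.range n, ∑ k ∈ Finset.range (2 ^ m), θ m k ^ 2) / 2 ^ n := by
  have hX : ∀ n j : ℕ, j ≤ 2 ^ n → X ((j : ℝ) / 2 ^ n) =
      ∑ m ∈ Finset.range n, ∑ k ∈ Finset.range (2 ^ m),
        θ m k * faberSchauder m k ((j : ℝ) / 2 ^ n) := by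
    intro n j hj
    have ht : (j : ℝ) / 2 ^ n ∈ Set.Icc (0:ℝ) 1 := by
      constructor
      · positivity
      · rw [div_le_one (by positivity)]
        exact_mod_cast hj
    refine tendsto_nhds_unique (hunif.tendsto_at ht) ?_
    refine Tendsto.congr' ?_ tendsto_const_nhds
    filter_upwards [eventually_ge_atTop n] with M hM
    apply Finset.sum_subset (Finset.range_subset_range.2 hM)
    intro m _ hm
    have hnm : n ≤ m := by
      by_contra h
      exact hm (Finset.mem_range.2 (by omega))
    exact Finset.sum_eq_zero fun k _ => by rw [fs_zero' m n j k hnm, mul_zero]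
  suffices H : ∀ n : ℕ,
      ∑ j ∈ Finset.range (2 ^ n),
          (X (((j : ℝ) + 1) / 2 ^ n) - X ((j : ℝ) / 2 ^ n)) ^ 2
        = (∑ m ∈ Finset.range n, ∑ k ∈ Finset.range (2 ^ m), θ m k ^ 2) / 2 ^ n by
    exact fun n _ => H n
  intro n
  induction n with
  | zero =>
    rw [pow_zero, Finset.sum_range_one]
    have h0 := hX 0 0 (by norm_num)
    have h1 := hX 0 1 (by norm_num)
    norm_num at h0 h1 ⊢
    rw [h0, h1]
    ring
  | succ n ih =>
    have hpn : (0:ℝ) < 2 ^ n := by positivity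
    have hne : (2:ℝ) ^ n ≠ 0 := ne_of_gt hpn
    have hw : ((2:ℝ) ^ ((n : ℝ) / 2)) ^ 2 = 2 ^ n := by
      have h1 : ((2:ℝ) ^ ((n : ℝ) / 2)) ^ 2 = (2:ℝ) ^ (((n : ℝ) / 2) * 2) := by
        rw [← Real.rpow_natCast ((2:ℝ) ^ ((n : ℝ) / 2)) 2,
          ← Real.rpow_mul (by norm_num)]
        norm_num
      rw [h1, div_mul_cancel₀ _ (two_ne_zero), Real.rpow_natCast]
    have mid : ∀ i : ℕ, i < 2 ^ n →
        (2 * X ((2 * (i : ℝ) + 1) / 2 ^ (n + 1)) - X ((i : ℝ) / 2 ^ n)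
          - X (((i : ℝ) + 1) / 2 ^ n)) ^ 2 = θ n i ^ 2 / 2 ^ n := by
      intro i hi
      have eM : X ((2 * (i : ℝ) + 1) / 2 ^ (n + 1)) =
          ∑ m ∈ Finset.range (n + 1), ∑ k ∈ Finset.range (2 ^ m),
            θ m k * faberSchauder m k ((2 * (i : ℝ) + 1) / 2 ^ (n + 1)) := by
        have h := hX (n + 1) (2 * i + 1) (by rw [pow_succ]; omega)
        rwa [show ((2 * i + 1 : ℕ) : ℝ) = 2 * (i : ℝ) + 1 by push_cast; ring] at h
      have eL : X ((i : ℝ) / 2 ^ n) =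
          ∑ m ∈ Finset.range (n + 1), ∑ k ∈ Finset.range (2 ^ m),
            θ m k * faberSchauder m k ((2 * (i : ℝ)) / 2 ^ (n + 1)) := by
        have h := hX (n + 1) (2 * i) (by rw [pow_succ]; omega)
        rw [show ((2 * i : ℕ) : ℝ) = 2 * (i : ℝ) by push_cast; ring] at h
        rw [show (i : ℝ) / 2 ^ n = (2 * (i : ℝ)) / 2 ^ (n + 1) by
          rw [pow_succ]; field_simp]
        exact h
      have eR : X (((i : ℝ) + 1) / 2 ^ n) =
          ∑ m ∈ Finset.range (n + 1), ∑ k ∈ Finset.range (2 ^ m),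
            θ m k * faberSchauder m k ((2 * (i : ℝ) + 2) / 2 ^ (n + 1)) := by
        have h := hX (n + 1) (2 * i + 2) (by rw [pow_succ]; omega)
        rw [show ((2 * i + 2 : ℕ) : ℝ) = 2 * (i : ℝ) + 2 by push_cast; ring] at h
        rw [show ((i : ℝ) + 1) / 2 ^ n = (2 * (i : ℝ) + 2) / 2 ^ (n + 1) by
          rw [pow_succ]; field_simp]
        exact h
      have comb : 2 * X ((2 * (i : ℝ) + 1) / 2 ^ (n + 1)) - X ((i : ℝ) / 2 ^ n)
          - X (((i : ℝ) + 1) / 2 ^ n)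
          = θ n i * ((2:ℝ) ^ ((n : ℝ) / 2) / 2 ^ n) := by
        rw [eM, eL, eR, Finset.mul_sum, ← Finset.sum_sub_distrib, ← Finset.sum_sub_distrib]
        have hcong : ∀ m ∈ Finset.range (n + 1),
            (2 * ∑ k ∈ Finset.range (2 ^ m), θ m k * faberSchauder m k ((2 * (i : ℝ) + 1) / 2 ^ (n + 1)))
              - (∑ k ∈ Finset.range (2 ^ m), θ m k * faberSchauder m k ((2 * (i : ℝ)) / 2 ^ (n + 1)))
              - (∑ k ∈ Finset.range (2 ^ m), θ m k * faberSchauder m k ((2 * (i : ℝ) + 2) / 2 ^ (n + 1)))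
            = ∑ k ∈ Finset.range (2 ^ m),
                θ m k * (if m = n ∧ k = i then (2:ℝ) ^ ((n : ℝ) / 2) / 2 ^ n else 0) := by
          intro m hm
          rw [Finset.mul_sum, ← Finset.sum_sub_distrib, ← Finset.sum_sub_distrib]
          refine Finset.sum_congr rfl fun k _ => ?_
          have h := fs_sd m n i k (Nat.lt_succ_iff.mp (Finset.mem_range.mp hm))
          linear_combination θ m k * h
        rw [Finset.sum_congr rfl hcong]
        simp only [mul_ite, mul_zero]
        rw [Finset.sum_eq_single n]
        · rw [Finset.sum_eq_single i]
          · simp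
          · intro b _ hb; simp [hb]
          · intro hni; exact absurd (Finset.mem_range.2 hi) hni
        · intro b _ hb
          exact Finset.sum_eq_zero fun k _ => by simp [hb]
        · intro h; exact absurd (Finset.self_mem_range_succ n) h
      rw [comb, mul_pow, div_pow, hw]
      field_simp
    have step : ∀ i ∈ Finset.range (2 ^ n),
        ((X ((((2 * i : ℕ) : ℝ) + 1) / 2 ^ (n + 1)) - X (((2 * i : ℕ) : ℝ) / 2 ^ (n + 1))) ^ 2
          + (X ((((2 * i + 1 : ℕ) : ℝ) + 1) / 2 ^ (n + 1)) - X (((2 * i + 1 : ℕ) : ℝ) / 2 ^ (n + 1))) ^ 2)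
        = ((X (((i : ℝ) + 1) / 2 ^ n) - X ((i : ℝ) / 2 ^ n)) ^ 2 + θ n i ^ 2 / 2 ^ n) / 2 := by
      intro i hi
      have hi' := Finset.mem_range.mp hi
      rw [show ((2 * i : ℕ) : ℝ) = 2 * (i : ℝ) by push_cast; ring,
        show ((2 * i + 1 : ℕ) : ℝ) = 2 * (i : ℝ) + 1 by push_cast; ring]
      rw [show (2 * (i : ℝ)) / 2 ^ (n + 1) = (i : ℝ) / 2 ^ n by
        rw [pow_succ]; field_simp]
      rw [show (2 * (i : ℝ) + 1 + 1) / 2 ^ (n + 1) = ((i : ℝ) + 1) / 2 ^ n by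
        rw [pow_succ]; field_simp; ring]
      have h := mid i hi'
      linear_combination h / 2
    rw [show (2:ℕ) ^ (n + 1) = 2 * 2 ^ n by ring, sum_range_two_mul]
    rw [Finset.sum_congr rfl step]
    rw [← Finset.sum_div, Finset.sum_add_distrib, ← Finset.sum_div, ih,
      Finset.sum_range_succ, pow_succ]
    field_simp
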